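/- Let ν be a measure on (R^T, B^T) satisfying ν(A) = ν_*(A \ {0_T}) for all A ∈ B^T. Then for every countable nonempty T_0 ⊆ T with ν{x : x restricted to T_0 equals 0} > 0, there exists t ∉ T_0 such that ν{x : x restricted to T_0 equals 0 and x(t) ≠ 0} > 0. -/

import Mathlib

open MeasureTheory Set
open scoped ENNReal

/-- The inner measure of a measure `ν`: `ν_*(E) = sup{ν(D) : D ⊆ E, D measurable}`. -/
noncomputable def innerMeasure {α : Type*} [MeasurableSpace α] (ν : Measure α) (E : Set α) :
    ℝ≥0∞ :=
  ⨆ (D : Set α) (_ : MeasurableSet D) (_ : D ⊆ E), ν D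

/-- Every measurable set in a product σ-algebra depends on countably many coordinates. -/
theorem measurableSet_dependsOn_countable {T : Type*} {D : Set (T → ℝ)}
    (hD : MeasurableSet D) :
    ∃ I : Set T, I.Countable ∧ ∀ x y : T → ℝ, (∀ i ∈ I, x i = y i) → (x ∈ D → y ∈ D) := by
  let M : MeasurableSpace (T → ℝ) :=
    { MeasurableSet' := fun S =>
        ∃ I : Set T, I.Countable ∧ ∀ x y : T → ℝ, (∀ i ∈ I, x i = y i) → (x ∈ S → y ∈ S)
      measurableSet_empty := ⟨∅, countable_empty, fun _ _ _ h => h.elim⟩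
      measurableSet_compl := by
        rintro S ⟨I, hI, h⟩
        exact ⟨I, hI, fun x y hxy hx hy => hx (h y x (fun i hi => (hxy i hi).symm) hy)⟩
      measurableSet_iUnion := by
        rintro f hf
        choose I hIc h using hf
        refine ⟨⋃ n, I n, countable_iUnion hIc, ?_⟩
        rintro x y hxy ⟨s, ⟨n, rfl⟩, hx⟩
        exact ⟨f n, ⟨n, rfl⟩, h n x y (fun i hi => hxy i (mem_iUnion.2 ⟨n, hi⟩)) hx⟩ }
  have hle : (MeasurableSpace.pi : MeasurableSpace (T → ℝ)) ≤ M := by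
    refine iSup_le fun t => ?_
    rintro S ⟨B, -, rfl⟩
    exact ⟨{t}, countable_singleton t, fun x y hxy hx => by
      simpa [Set.mem_preimage, ← hxy t rfl] using hx⟩
  exact hle D hD

theorem exists_coord_ne_zero_of_levy_L2 {T : Type*} (ν : Measure (T → ℝ))
    (hL2 : ∀ A : Set (T → ℝ), MeasurableSet A → ν A = innerMeasure ν (A \ {0})) :
    ∀ T0 : Set T, T0.Countable → T0.Nonempty →
      0 < ν {x : T → ℝ | ∀ t ∈ T0, x t = 0} →
      ∃ t ∉ T0, 0 < ν {x : T → ℝ | (∀ s ∈ T0, x s = 0) ∧ x t ≠ 0} := by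
  classical
  intro T0 hT0c _hT0ne hpos
  set A : Set (T → ℝ) := {x : T → ℝ | ∀ t ∈ T0, x t = 0} with hA
  have hAm : MeasurableSet A := by
    have : A = ⋂ t ∈ T0, (fun x : T → ℝ => x t) ⁻¹' {0} := by
      ext x; simp [hA]
    rw [this]
    exact MeasurableSet.biInter hT0c fun t _ => (measurable_pi_apply t) (measurableSet_singleton 0)
  -- get a measurable D ⊆ A \ {0} of positive measure
  have hD : ∃ D : Set (T → ℝ), MeasurableSet D ∧ D ⊆ A \ {0} ∧ 0 < ν D := by
    by_contra hc
    push_neg at hc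
    have : innerMeasure ν (A \ {0}) = 0 := by
      refine le_antisymm ?_ zero_le
      refine iSup_le fun D => iSup_le fun hDm => iSup_le fun hDs => ?_
      exact le_of_eq (le_antisymm (hc D hDm hDs) zero_le)
    rw [hL2 A hAm, this] at hpos
    exact lt_irrefl 0 hpos
  obtain ⟨D, hDm, hDs, hDpos⟩ := hD
  obtain ⟨I, hIc, hI⟩ := measurableSet_dependsOn_countable hDm
  -- D is covered by the sets indexed by t ∈ I \ T0
  have hcov : D ⊆ ⋃ t ∈ I \ T0, {x : T → ℝ | (∀ s ∈ T0, x s = 0) ∧ x t ≠ 0} := by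
    intro x hx
    set y : T → ℝ := fun t => if t ∈ I then x t else 0 with hy
    have hyD : y ∈ D := hI x y (fun i hi => by simp [hy, hi]) hx
    have hyA : y ∈ A \ {0} := hDs hyD
    have hyne : y ≠ 0 := fun h => hyA.2 (by simpa using h)
    obtain ⟨t, ht⟩ : ∃ t, y t ≠ 0 := by
      by_contra h; push_neg at h; exact hyne (funext h)
    have htI : t ∈ I := by
      by_contra h; exact ht (by simp [hy, h])
    have hxt : x t ≠ 0 := by simpa [hy, htI] using ht
    have htT0 : t ∉ T0 := fun h => ht (hyA.1 t h)
    exact mem_biUnion ⟨htI, htT0⟩ ⟨(hDs hx).1, hxt⟩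
  by_contra hcon
  push_neg at hcon
  have hnull : ν (⋃ t ∈ I \ T0, {x : T → ℝ | (∀ s ∈ T0, x s = 0) ∧ x t ≠ 0}) = 0 := by
    refine measure_biUnion_null_iff (hIc.mono diff_subset) |>.2 fun t ht => ?_
    exact le_antisymm (hcon t ht.2) zero_le
  have := (measure_mono hcov).trans_eq hnull
  exact absurd (le_antisymm this zero_le) hDpos.ne'
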